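/- arXiv:1201.1654 — 3 statements merged into one kernel-verified Lean document; each statement's English description precedes it below -/
import Mathlib

section
/- Let X be a topological space and Γ, Ψ, Φ : X → ℝ three sequentially lower semicontinuous functions, with Γ also sequentially inf-compact, satisfying: (a) inf_{x∈X} (μΓ(x) + Ψ(x)) = −∞ for all μ > 0; (b) inf_{x∈X} (Ψ(x) + Φ(x)) > −∞; (c) there exists r ∈ (inf_X Φ, sup_X Φ) such that inf_{Φ⁻¹((−∞,r])} Γ < inf_{Φ⁻¹(r)} Γ. Then for each μ > max{0, μ*(Γ, Ψ, Φ, r)}, one has α(μΓ + Ψ, Φ, r) = 0 and β(μΓ + Ψ, Φ, r) > 0. -/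
open Filter Topology

/-- Theorem A = [5], Theorem 2: for sequentially lower semicontinuous
`Γ, Ψ, Φ : X → ℝ` with `Γ` sequentially inf-compact, if `inf_X (μΓ + Ψ) = -∞` for
all `μ > 0`, `Ψ + Φ` is bounded below, and `r ∈ (inf_X Φ, sup_X Φ)` satisfies
`inf_{Φ⁻¹((-∞,r])} Γ < inf_{Φ⁻¹(r)} Γ`, then for every `μ > max{0, μ*(Γ,Ψ,Φ,r)}`
one has `α(μΓ + Ψ, Φ, r) = 0` and `β(μΓ + Ψ, Φ, r) > 0`. -/
theorem stmt1 {X : Type*} [TopologicalSpace X]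
    (Γ Ψ Φ : X → ℝ)
    (hΓlsc : ∀ (x : X) (u : ℕ → X), Tendsto u atTop (𝓝 x) →
      (Γ x : EReal) ≤ liminf (fun n => (Γ (u n) : EReal)) atTop)
    (hΨlsc : ∀ (x : X) (u : ℕ → X), Tendsto u atTop (𝓝 x) →
      (Ψ x : EReal) ≤ liminf (fun n => (Ψ (u n) : EReal)) atTop)
    (hΦlsc : ∀ (x : X) (u : ℕ → X), Tendsto u atTop (𝓝 x) →
      (Φ x : EReal) ≤ liminf (fun n => (Φ (u n) : EReal)) atTop)
    (hΓcpt : ∀ ρ : ℝ, IsSeqCompact {x : X | Γ x ≤ ρ})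
    (ha : ∀ μ : ℝ, 0 < μ → ∀ K : ℝ, ∃ x : X, μ * Γ x + Ψ x < K)
    (hb : BddBelow (Set.range fun x => Ψ x + Φ x))
    (r : ℝ) (hr₁ : ∃ x : X, Φ x < r) (hr₂ : ∃ x : X, r < Φ x)
    (hc : (⨅ x : {x : X // Φ x ≤ r}, (Γ x : EReal)) <
      ⨅ x : {x : X // Φ x = r}, (Γ x : EReal))
    -- the quantities `γ`, `η_r` and `μ*(Γ,Ψ,Φ,r)` :
    (γ : ℝ) (hγ : γ = sInf (Set.range fun x => Ψ x + Φ x))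
    (ηr : EReal) (hηr : ηr = ⨅ x : {x : X // Φ x = r}, (Γ x : EReal))
    (mustar : EReal)
    (hmustar : mustar = sInf {t : EReal | ∃ x : X, Φ x < r ∧ (Γ x : EReal) < ηr ∧
      t = ((Ψ x - γ + r : ℝ) : EReal) / (ηr - (Γ x : EReal))})
    (μ : ℝ) (hμ0 : 0 < μ) (hμ : mustar < (μ : EReal)) :
    -- conclusion : `α(μΓ + Ψ, Φ, r) = 0` and `β(μΓ + Ψ, Φ, r) > 0`
    (⨅ x : {x : X // Φ x < r},
        (((μ * Γ x + Ψ x - sInf ((fun y => μ * Γ y + Ψ y) '' {y : X | Φ y ≤ r})) /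
          (r - Φ x) : ℝ) : EReal)) = 0 ∧
    0 < ⨆ x : {x : X // r < Φ x},
        (((μ * Γ x + Ψ x - sInf ((fun y => μ * Γ y + Ψ y) '' {y : X | Φ y ≤ r})) /
          (r - Φ x) : ℝ) : EReal) := by

  classical
  obtain ⟨x₁, hx₁⟩ := hr₁
  -- `γ` is a lower bound for `Ψ + Φ`
  have hγle : ∀ x : X, γ ≤ Ψ x + Φ x := by
    intro x
    rw [hγ]
    exact csInf_le hb ⟨x, rfl⟩
  -- `Γ` is bounded below
  obtain ⟨c, hc0⟩ : ∃ c : ℝ, ∀ x, c ≤ Γ x := by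
    by_contra h
    push_neg at h
    choose u hu using fun n : ℕ => h (-(n : ℝ))
    obtain ⟨x, -, φ, hφ, hlim⟩ :=
      hΓcpt 0 (x := u) (fun n => (hu n).le.trans (neg_nonpos.mpr (Nat.cast_nonneg n)))
    have hx := hΓlsc x (u ∘ φ) hlim
    obtain ⟨N, hN⟩ := exists_nat_gt (-Γ x)
    have hev : ∀ᶠ n in atTop, ((Γ ((u ∘ φ) n) : EReal)) ≤ ((-(N : ℝ) : ℝ) : EReal) := by
      filter_upwards [eventually_ge_atTop N] with n hn
      have h1 : Γ (u (φ n)) < -(φ n : ℝ) := hu (φ n)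
      have h2 : (N : ℝ) ≤ (φ n : ℝ) := by
        exact_mod_cast hn.trans hφ.le_apply
      have h3 : Γ (u (φ n)) ≤ -(N : ℝ) := by linarith
      exact_mod_cast h3
    have hli : liminf (fun n => ((Γ ((u ∘ φ) n)) : EReal)) atTop ≤ ((-(N : ℝ) : ℝ) : EReal) := by
      have := Filter.liminf_le_liminf hev
      rwa [Filter.liminf_const] at this
    have : (Γ x : EReal) ≤ ((-(N : ℝ) : ℝ) : EReal) := hx.trans hli
    rw [EReal.coe_le_coe_iff] at this
    linarith
  set m := sInf ((fun y => μ * Γ y + Ψ y) '' {y : X | Φ y ≤ r}) with hm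
  have hne : ((fun y => μ * Γ y + Ψ y) '' {y : X | Φ y ≤ r}).Nonempty :=
    ⟨_, ⟨x₁, hx₁.le, rfl⟩⟩
  have hbdd : BddBelow ((fun y => μ * Γ y + Ψ y) '' {y : X | Φ y ≤ r}) := by
    refine ⟨μ * c + (γ - r), ?_⟩
    rintro _ ⟨x, hx, rfl⟩
    show μ * c + (γ - r) ≤ μ * Γ x + Ψ x
    have h1 : γ ≤ Ψ x + Φ x := hγle x
    have h2 : c ≤ Γ x := hc0 x
    have h3 : Φ x ≤ r := hx
    nlinarith [mul_le_mul_of_nonneg_left h2 hμ0.le]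
  have hmle : ∀ x : X, Φ x ≤ r → m ≤ μ * Γ x + Ψ x := fun x hx => csInf_le hbdd ⟨x, hx, rfl⟩
  -- minimizing sequence
  have key : ∀ n : ℕ, ∃ x : X, Φ x ≤ r ∧ μ * Γ x + Ψ x < m + 1 / ((n : ℝ) + 1) := by
    intro n
    have hlt : m < m + 1 / ((n : ℝ) + 1) := by
      have : (0 : ℝ) < 1 / ((n : ℝ) + 1) := by positivity
      linarith
    obtain ⟨y, ⟨x, hx, rfl⟩, hy⟩ := exists_lt_of_csInf_lt hne hlt
    exact ⟨x, hx, hy⟩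
  choose u hu1 hu2 using key
  have honele : ∀ n : ℕ, 1 / ((n : ℝ) + 1) ≤ 1 := by
    intro n
    rw [div_le_one (by positivity)]
    linarith [Nat.cast_nonneg (α := ℝ) n]
  set ρ := (m + 1 - γ + r) / μ with hρ
  have hΓu : ∀ n, Γ (u n) ≤ ρ := by
    intro n
    rw [hρ, le_div_iff₀ hμ0]
    have h1 := hγle (u n)
    have h2 := hu1 n
    have h3 := hu2 n
    have h4 := honele n
    linarith
  have hΨub : ∀ n, Ψ (u n) ≤ m + 1 - μ * c := by
    intro n
    have h2 := hu2 n
    have h4 := honele n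
    nlinarith [mul_le_mul_of_nonneg_left (hc0 (u n)) hμ0.le]
  have hΨlb : ∀ n, γ - r ≤ Ψ (u n) := fun n => by linarith [hγle (u n), hu1 n]
  obtain ⟨xh, -, φ₁, hφ₁, hlim1⟩ := hΓcpt ρ (x := u) hΓu
  obtain ⟨a, -, φ₂, hφ₂, hlima⟩ :=
    (isCompact_Icc (a := c) (b := ρ)).tendsto_subseq
      (x := fun n => Γ (u (φ₁ n))) (fun n => ⟨hc0 _, hΓu _⟩)
  obtain ⟨b, -, φ₃, hφ₃, hlimb⟩ :=
    (isCompact_Icc (a := γ - r) (b := m + 1 - μ * c)).tendsto_subseq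
      (x := fun n => Ψ (u (φ₁ (φ₂ n)))) (fun n => ⟨hΨlb _, hΨub _⟩)
  set σ : ℕ → ℕ := fun n => φ₁ (φ₂ (φ₃ n)) with hσdef
  have hσ : StrictMono σ := hφ₁.comp (hφ₂.comp hφ₃)
  have hs3 : Tendsto (u ∘ σ) atTop (𝓝 xh) :=
    hlim1.comp ((hφ₂.comp hφ₃).tendsto_atTop)
  have hΓs : Tendsto (fun n => Γ (u (σ n))) atTop (𝓝 a) :=
    hlima.comp hφ₃.tendsto_atTop
  have hΨs : Tendsto (fun n => Ψ (u (σ n))) atTop (𝓝 b) := hlimb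
  -- μ a + b ≤ m
  have hΘs : Tendsto (fun n => μ * Γ (u (σ n)) + Ψ (u (σ n))) atTop (𝓝 (μ * a + b)) :=
    (hΓs.const_mul μ).add hΨs
  have haux : Tendsto (fun n : ℕ => m + 1 / ((n : ℝ) + 1)) atTop (𝓝 m) := by
    have := tendsto_const_nhds (x := m) (f := atTop (α := ℕ)) |>.add
      tendsto_one_div_add_atTop_nhds_zero_nat
    simpa using this
  have habm : μ * a + b ≤ m := by
    refine le_of_tendsto_of_tendsto' hΘs haux fun n => ?_
    have h1 : μ * Γ (u (σ n)) + Ψ (u (σ n)) < m + 1 / ((σ n : ℝ) + 1) := hu2 (σ n)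
    have h2 : 1 / ((σ n : ℝ) + 1) ≤ 1 / ((n : ℝ) + 1) := by
      apply one_div_le_one_div_of_le (by positivity)
      have : (n : ℝ) ≤ (σ n : ℝ) := by exact_mod_cast hσ.le_apply
      linarith
    linarith
  -- lower semicontinuity at xh
  have hcoelim : ∀ (f : X → ℝ) (l : ℝ), Tendsto (fun n => f (u (σ n))) atTop (𝓝 l) →
      liminf (fun n => ((f ((u ∘ σ) n)) : EReal)) atTop = (l : EReal) := by
    intro f l hf
    exact ((continuous_coe_real_ereal.tendsto l).comp hf).liminf_eq
  have hΓxh : Γ xh ≤ a := by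
    have h := (hΓlsc xh (u ∘ σ) hs3).trans_eq (hcoelim Γ a hΓs)
    exact_mod_cast h
  have hΨxh : Ψ xh ≤ b := by
    have h := (hΨlsc xh (u ∘ σ) hs3).trans_eq (hcoelim Ψ b hΨs)
    exact_mod_cast h
  have hΦxh : Φ xh ≤ r := by
    have h := hΦlsc xh (u ∘ σ) hs3
    have hev : ∀ᶠ n in atTop, ((Φ ((u ∘ σ) n)) : EReal) ≤ ((r : ℝ) : EReal) :=
      Filter.Eventually.of_forall fun n => by exact_mod_cast hu1 (σ n)
    have h2 := Filter.liminf_le_liminf hev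
    rw [Filter.liminf_const] at h2
    exact_mod_cast h.trans h2
  have hΘxh : μ * Γ xh + Ψ xh ≤ m := by
    nlinarith [mul_le_mul_of_nonneg_left hΓxh hμ0.le]
  -- extract a witness from `mustar < μ`
  rw [hmustar] at hμ
  obtain ⟨t, htmem, ht⟩ := sInf_lt_iff.mp hμ
  obtain ⟨x₀, hx₀r, hx₀η, rfl⟩ := htmem
  have hp : 0 < Ψ x₀ - γ + r := by linarith [hγle x₀]
  have key2 : ((Γ x₀ + (Ψ x₀ - γ + r) / μ : ℝ) : EReal) < ηr := by
    rcases eq_top_or_lt_top ηr with h | h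
    · rw [h]; exact EReal.coe_lt_top _
    · have hb' : ηr ≠ ⊥ := fun hbot => by simp [hbot] at hx₀η
      lift ηr to ℝ using ⟨h.ne, hb'⟩ with e
      rw [EReal.coe_lt_coe_iff] at hx₀η
      have hdiv : (Ψ x₀ - γ + r) / (e - Γ x₀) < μ := by
        rw [← EReal.coe_lt_coe_iff, EReal.coe_div, EReal.coe_sub]
        exact ht
      have hpos : 0 < e - Γ x₀ := by linarith
      have h1 : Ψ x₀ - γ + r < μ * (e - Γ x₀) := (div_lt_iff₀ hpos).mp hdiv
      rw [EReal.coe_lt_coe_iff]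
      have h2 : (Ψ x₀ - γ + r) / μ < e - Γ x₀ := (div_lt_iff₀ hμ0).mpr (by linarith)
      linarith
  -- the minimum is attained with Φ xh < r
  have hxhlt : Φ xh < r := by
    by_contra hcon
    push_neg at hcon
    have heq : Φ xh = r := le_antisymm hΦxh hcon
    have hηle : ηr ≤ (Γ xh : EReal) := by
      rw [hηr]
      exact iInf_le (fun x : {x : X // Φ x = r} => ((Γ x.1 : ℝ) : EReal)) ⟨xh, heq⟩
    have hΨxh2 : γ - r ≤ Ψ xh := by
      have := hγle xh
      linarith [heq.le]
    have hmx0 : m ≤ μ * Γ x₀ + Ψ x₀ := hmle x₀ hx₀r.le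
    have hΓineq : Γ xh ≤ Γ x₀ + (Ψ x₀ - γ + r) / μ := by
      have h1 : μ * Γ xh ≤ μ * Γ x₀ + (Ψ x₀ - γ + r) := by linarith
      have h2 : μ * (Γ x₀ + (Ψ x₀ - γ + r) / μ) = μ * Γ x₀ + (Ψ x₀ - γ + r) := by
        field_simp
      nlinarith
    have : (Γ xh : EReal) < (Γ xh : EReal) := by
      calc (Γ xh : EReal) ≤ ((Γ x₀ + (Ψ x₀ - γ + r) / μ : ℝ) : EReal) := by
            exact_mod_cast hΓineq
        _ < ηr := key2
        _ ≤ (Γ xh : EReal) := hηle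
    exact absurd this (lt_irrefl _)
  constructor
  · -- α = 0
    apply le_antisymm
    · refine iInf_le_of_le ⟨xh, hxhlt⟩ ?_
      have hq : (μ * Γ xh + Ψ xh - m) / (r - Φ xh) ≤ 0 :=
        div_nonpos_of_nonpos_of_nonneg (by linarith) (by linarith)
      exact_mod_cast hq
    · refine le_iInf ?_
      rintro ⟨x, hx⟩
      have hq : (0 : ℝ) ≤ (μ * Γ x + Ψ x - m) / (r - Φ x) :=
        div_nonneg (by linarith [hmle x hx.le]) (by linarith)
      exact_mod_cast hq
  · -- β > 0
    obtain ⟨x₂, hx₂⟩ := ha μ hμ0 m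
    have hx₂r : r < Φ x₂ := by
      by_contra h
      push_neg at h
      exact absurd (hmle x₂ h) (not_le.mpr hx₂)
    have hq : 0 < (μ * Γ x₂ + Ψ x₂ - m) / (r - Φ x₂) :=
      div_pos_of_neg_of_neg (by linarith) (by linarith)
    calc (0 : EReal) < (((μ * Γ x₂ + Ψ x₂ - m) / (r - Φ x₂) : ℝ) : EReal) := by
          exact_mod_cast hq
      _ ≤ _ := le_iSup (fun x : {x : X // r < Φ x} =>
          (((μ * Γ x.1 + Ψ x.1 - m) / (r - Φ x.1) : ℝ) : EReal)) ⟨x₂, hx₂r⟩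
end

section
/- Let X be a topological space, A ⊆ ℝ an open interval, and P : X × A → ℝ a function satisfying: (a₁) for each x ∈ X, the function λ ↦ P(x, λ) is quasi-concave and continuous on A; (a₂) for each λ ∈ A, the function x ↦ P(x, λ) is lower semicontinuous and inf-compact; (a₃) sup_{λ∈A} inf_{x∈X} P(x, λ) < inf_{x∈X} sup_{λ∈A} P(x, λ). Then there exists λ* ∈ A such that the function x ↦ P(x, λ*) has at least two global minima. -/
open Filter Topology

section Aux

variable {X : Type*} [TopologicalSpace X]

private lemma lsc_exists_min {f : X → ℝ} (hf : LowerSemicontinuous f)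
    (hcpt : ∀ r : ℝ, IsCompact {x | f x ≤ r}) (x₀ : X) : ∃ z, ∀ y, f z ≤ f y := by
  have hcl : ∀ r : ℝ, IsClosed {x | f x ≤ r} := fun r => hf.isClosed_preimage r
  by_cases hbdd : BddBelow (Set.range f)
  · set m := sInf (Set.range f) with hm
    have hrne : (Set.range f).Nonempty := ⟨f x₀, x₀, rfl⟩
    have hne : ∀ n : ℕ, {x | f x ≤ m + 1/(n+1)}.Nonempty := by
      intro n
      have hlt : sInf (Set.range f) < m + 1/(n+1) := by
        rw [← hm]
        have : (0:ℝ) < 1/(n+1) := by positivity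
        linarith
      obtain ⟨r, ⟨x, rfl⟩, hr⟩ := (csInf_lt_iff hbdd hrne).1 hlt
      exact ⟨x, hr.le⟩
    have hdec : ∀ n : ℕ, {x | f x ≤ m + 1/(n+1+1)} ⊆ {x | f x ≤ m + 1/(n+1)} := by
      intro n x hx
      have h1 : (1:ℝ)/(n+1+1) ≤ 1/(n+1) := by
        have : (0:ℝ) < n+1 := by positivity
        rw [div_le_div_iff₀ (by linarith) this]; linarith
      calc f x ≤ m + 1/(n+1+1) := hx
        _ ≤ m + 1/(n+1) := by linarith
    obtain ⟨z, hz⟩ := IsCompact.nonempty_iInter_of_sequence_nonempty_isCompact_isClosed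
      (fun n : ℕ => {x | f x ≤ m + 1/(n+1)}) (fun n => by push_cast; exact_mod_cast hdec n)
      hne (hcpt _) (fun n => hcl _)
    simp only [Set.mem_iInter, Set.mem_setOf_eq] at hz
    have hzm : f z ≤ m := by
      by_contra h
      push_neg at h
      obtain ⟨n, hn⟩ := exists_nat_one_div_lt (by linarith : (0:ℝ) < f z - m)
      have := hz n
      linarith
    exact ⟨z, fun y => le_trans hzm (csInf_le hbdd ⟨y, rfl⟩)⟩
  · exfalso
    rw [not_bddBelow_iff] at hbdd
    have hne : ∀ n : ℕ, {x | f x ≤ -(n+1)}.Nonempty := by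
      intro n
      obtain ⟨r, ⟨x, rfl⟩, hr⟩ := hbdd (-(n+1))
      exact ⟨x, hr.le⟩
    have hdec : ∀ n : ℕ, {x | f x ≤ -((n:ℝ)+1+1)} ⊆ {x | f x ≤ -((n:ℝ)+1)} := by
      intro n x hx
      simp only [Set.mem_setOf_eq] at *
      linarith
    obtain ⟨z, hz⟩ := IsCompact.nonempty_iInter_of_sequence_nonempty_isCompact_isClosed
      (fun n : ℕ => {x | f x ≤ -((n:ℝ)+1)}) (fun n => by push_cast; exact_mod_cast hdec n)
      (fun n => by exact_mod_cast hne n) (hcpt _) (fun n => hcl _)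
    simp only [Set.mem_iInter, Set.mem_setOf_eq] at hz
    obtain ⟨n, hn⟩ := exists_nat_gt (-f z)
    have := hz n
    linarith

private lemma threePoint {A : Set ℝ} {P : X → ℝ → ℝ}
    (hq : ∀ x : X, ∀ r : ℝ, Convex ℝ {l ∈ A | r ≤ P x l})
    {x : X} {l₁ l l₂ : ℝ} (h₁ : l₁ ∈ A) (h₂ : l₂ ∈ A) (hl : l ∈ Set.Icc l₁ l₂) :
    min (P x l₁) (P x l₂) ≤ P x l := by
  have h12 : l₁ ≤ l₂ := le_trans hl.1 hl.2
  have hseg : segment ℝ l₁ l₂ ⊆ {l ∈ A | min (P x l₁) (P x l₂) ≤ P x l} :=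
    (hq x _).segment_subset ⟨h₁, min_le_left _ _⟩ ⟨h₂, min_le_right _ _⟩
  exact (hseg (by rw [segment_eq_Icc h12]; exact hl)).2

/-- If `P x` is `≤ ρ` at `l₀` but `> ρ` at some `η < l₀`, then `P x` is decreasing to the
right of `l₀`. -/
private lemma decLemma {A : Set ℝ} {P : X → ℝ → ℝ} {ρ : ℝ}
    (hq : ∀ x : X, ∀ r : ℝ, Convex ℝ {l ∈ A | r ≤ P x l})
    {x : X} {η l₀ l₂ : ℝ} (hη : η ∈ A) (h₂ : l₂ ∈ A)
    (hηl : η < l₀) (hbump : ρ < P x η) (hval : P x l₀ < ρ) (hle : l₀ ≤ l₂) :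
    P x l₂ ≤ P x l₀ := by
  by_contra h
  push_neg at h
  have h3 := threePoint hq (x := x) hη h₂ ⟨le_of_lt hηl, hle⟩
  rcases min_le_iff.1 h3 with h'|h'
  · linarith
  · linarith

private lemma incLemma {A : Set ℝ} {P : X → ℝ → ℝ} {ρ : ℝ}
    (hq : ∀ x : X, ∀ r : ℝ, Convex ℝ {l ∈ A | r ≤ P x l})
    {x : X} {l₁ l₀ ξ : ℝ} (h₁ : l₁ ∈ A) (hξ : ξ ∈ A)
    (hlξ : l₀ < ξ) (hbump : ρ < P x ξ) (hval : P x l₀ < ρ) (hle : l₁ ≤ l₀) :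
    P x l₁ ≤ P x l₀ := by
  by_contra h
  push_neg at h
  have h3 := threePoint hq (x := x) h₁ hξ ⟨hle, le_of_lt hlξ⟩
  rcases min_le_iff.1 h3 with h'|h'
  · linarith
  · linarith

/-- The "all minimizers have a left bump" configuration is impossible. -/
private lemma coverContra {A : Set ℝ} (hAopen : IsOpen A) (hAne : A.Nonempty)
    {P : X → ℝ → ℝ} {ρ : ℝ}
    (hq : ∀ x : X, ∀ r : ℝ, Convex ℝ {l ∈ A | r ≤ P x l})
    (hlsc : ∀ l ∈ A, LowerSemicontinuous fun x => P x l)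
    (hinfcpt : ∀ l ∈ A, ∀ r : ℝ, IsCompact {x : X | P x l ≤ r})
    (hρ1 : ∀ l ∈ A, ∃ x, P x l < ρ)
    (hρ2 : ∀ x : X, ∃ l ∈ A, ρ < P x l)
    (hall : ∀ l ∈ A, ∃ x, (∀ y, P x l ≤ P y l) ∧ ∃ η ∈ A, η < l ∧ ρ < P x η) :
    False := by
  obtain ⟨lbar, hlbar⟩ := hAne
  have hScpt : IsCompact {x : X | P x lbar ≤ ρ} := hinfcpt lbar hlbar ρ
  have hcov : {x : X | P x lbar ≤ ρ} ⊆ ⋃ i : A, {x | ρ < P x i} := by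
    intro x _
    obtain ⟨l, hlA, hl⟩ := hρ2 x
    exact Set.mem_iUnion.2 ⟨⟨l, hlA⟩, hl⟩
  obtain ⟨t, ht⟩ := hScpt.elim_finite_subcover (fun i : A => {x | ρ < P x i})
    (fun i => (hlsc i i.2).isOpen_preimage ρ) hcov
  obtain ⟨xb, hxbmin, _⟩ := hall lbar hlbar
  obtain ⟨x₀, hx₀⟩ := hρ1 lbar hlbar
  have hSxb : xb ∈ {x : X | P x lbar ≤ ρ} := le_of_lt (lt_of_le_of_lt (hxbmin x₀) hx₀)
  have htne : t.Nonempty := by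
    rcases Set.mem_iUnion₂.1 (ht hSxb) with ⟨i, hi, _⟩
    exact ⟨i, hi⟩
  set ν := t.inf' htne (fun i => (i : ℝ)) with hν
  have hνA : ν ∈ A := by
    obtain ⟨i, _, he⟩ := Finset.exists_mem_eq_inf' htne (fun i : A => (i : ℝ))
    rw [hν, he]; exact i.2
  have hcA : min ν lbar ∈ A := by
    rcases min_cases ν lbar with ⟨h, _⟩|⟨h, _⟩ <;> rw [h] <;> assumption
  obtain ⟨ε, hε, hball⟩ := Metric.isOpen_iff.1 hAopen _ hcA
  set lam := min ν lbar - ε/2 with hlam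
  have hlamA : lam ∈ A := by
    apply hball
    rw [Metric.mem_ball, Real.dist_eq, hlam]
    rw [abs_lt]
    constructor <;> linarith
  have hlamlt : lam < min ν lbar := by rw [hlam]; linarith
  obtain ⟨x, hxmin, η, hηA, hηlam, hbump⟩ := hall lam hlamA
  obtain ⟨x₀', hx₀'⟩ := hρ1 lam hlamA
  have hxval : P x lam < ρ := lt_of_le_of_lt (hxmin x₀') hx₀'
  have hxS : x ∈ {x : X | P x lbar ≤ ρ} := by
    have hle : lam ≤ lbar := le_of_lt (lt_of_lt_of_le hlamlt (min_le_right _ _))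
    have := decLemma hq hηA hlbar hηlam hbump hxval hle
    exact le_trans this hxval.le
  rcases Set.mem_iUnion₂.1 (ht hxS) with ⟨i, hit, hxi⟩
  have hilam : (i : ℝ) < lam := by
    by_contra hge
    push_neg at hge
    have := decLemma hq hηA i.2 hηlam hbump hxval hge
    simp only [Set.mem_setOf_eq] at hxi
    linarith
  have hνi : ν ≤ (i : ℝ) := Finset.inf'_le _ hit
  have := min_le_left ν lbar
  linarith

/-- The "cluster point" contradiction: minimizer at `θ` has a left bump while all minimizers
just below `θ` have right bumps. -/
private lemma clusterContra {A : Set ℝ} (hAconv : Convex ℝ A) (hAopen : IsOpen A)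
    {P : X → ℝ → ℝ} {ρ : ℝ}
    (hq : ∀ x : X, ∀ r : ℝ, Convex ℝ {l ∈ A | r ≤ P x l})
    (hcont : ∀ x : X, ContinuousOn (fun l => P x l) A)
    (hlsc : ∀ l ∈ A, LowerSemicontinuous fun x => P x l)
    (hinfcpt : ∀ l ∈ A, ∀ r : ℝ, IsCompact {x : X | P x l ≤ r})
    (hρ1 : ∀ l ∈ A, ∃ x, P x l < ρ)
    (huniq : ∀ l ∈ A, ∀ u v : X, (∀ y, P u l ≤ P y l) → (∀ y, P v l ≤ P y l) → u = v)
    {θ : ℝ} (hθA : θ ∈ A) {u : X} (hu : ∀ y, P u θ ≤ P y θ)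
    {η : ℝ} (hηA : η ∈ A) (hηθ : η < θ) (hbump : ρ < P u η)
    (hbelow : ∀ l ∈ A, l < θ → ∃ x, (∀ y, P x l ≤ P y l) ∧ ∃ l' ∈ A, l < l' ∧ ρ < P x l') :
    False := by
  have hIooA : Set.Ioo η θ ⊆ A :=
    Set.Ioo_subset_Icc_self.trans (hAconv.ordConnected.out hηA hθA)
  have hchoice : ∀ l : ℝ, l ∈ Set.Ioo η θ →
      ∃ x, (∀ y, P x l ≤ P y l) ∧ ∃ l' ∈ A, l < l' ∧ ρ < P x l' :=
    fun l hl => hbelow l (hIooA hl) hl.2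
  haveI : Nonempty X := ⟨u⟩
  choose! φ hφmin ξ hξA hξgt hξbump using hchoice
  have hφval : ∀ l ∈ Set.Ioo η θ, P (φ l) l < ρ := by
    intro l hl
    obtain ⟨x₀, hx₀⟩ := hρ1 l (hIooA hl)
    exact lt_of_le_of_lt (hφmin l hl x₀) hx₀
  have hinc : ∀ l ∈ Set.Ioo η θ, ∀ l'' ∈ A, l'' ≤ l → P (φ l) l'' ≤ P (φ l) l := by
    intro l hl l'' hA'' hle
    exact incLemma hq hA'' (hξA l hl) (hξgt l hl) (hξbump l hl) (hφval l hl) hle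
  have hKcpt : IsCompact {x : X | P x η ≤ ρ} := hinfcpt η hηA ρ
  have hLnb : (𝓝[Set.Ioo η θ] θ).NeBot := by
    rw [← mem_closure_iff_nhdsWithin_neBot, closure_Ioo (ne_of_lt hηθ)]
    exact ⟨le_of_lt hηθ, le_refl θ⟩
  have hmapK : ∀ l ∈ Set.Ioo η θ, φ l ∈ {x : X | P x η ≤ ρ} := fun l hl =>
    le_trans (hinc l hl η hηA (le_of_lt hl.1)) (le_of_lt (hφval l hl))
  have hFK : Filter.map φ (𝓝[Set.Ioo η θ] θ) ≤ 𝓟 {x : X | P x η ≤ ρ} := by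
    rw [Filter.le_principal_iff, Filter.mem_map]
    exact Filter.mem_of_superset self_mem_nhdsWithin hmapK
  obtain ⟨w, hwK, hwcl⟩ := hKcpt.exists_clusterPt hFK
  have stepA : ∀ l' ∈ A, l' < θ → P w l' ≤ P u θ := by
    intro l' hl'A hl'θ
    by_contra hgt
    push_neg at hgt
    set y := (P u θ + P w l') / 2 with hy
    have hy1 : P u θ < y := by rw [hy]; linarith
    have hy2 : y < P w l' := by rw [hy]; linarith
    have hev1 : ∀ᶠ l in 𝓝[Set.Ioo η θ] θ, l' < l :=
      (lt_mem_nhds hl'θ).filter_mono nhdsWithin_le_nhds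
    have htend : Filter.Tendsto (fun l => P u l) (𝓝[Set.Ioo η θ] θ) (𝓝 (P u θ)) :=
      ((hcont u) θ hθA).mono_left (nhdsWithin_mono θ hIooA)
    have hev2 : ∀ᶠ l in 𝓝[Set.Ioo η θ] θ, P u l < y := htend.eventually (gt_mem_nhds hy1)
    have hevIoo : ∀ᶠ l in 𝓝[Set.Ioo η θ] θ, l ∈ Set.Ioo η θ :=
      eventually_mem_nhdsWithin
    have hevL : ∀ᶠ l in 𝓝[Set.Ioo η θ] θ, P (φ l) l' < y := by
      filter_upwards [hev1, hev2, hevIoo] with l h1 h2 h3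
      calc P (φ l) l' ≤ P (φ l) l := hinc l h3 l' hl'A (le_of_lt h1)
        _ ≤ P u l := hφmin l h3 u
        _ < y := h2
    have hevF : ∀ᶠ x in Filter.map φ (𝓝[Set.Ioo η θ] θ), P x l' < y :=
      Filter.eventually_map.2 hevL
    have hnw : ∀ᶠ x in 𝓝 w, y < P x l' := hlsc l' hl'A w y hy2
    have : (𝓝 w ⊓ Filter.map φ (𝓝[Set.Ioo η θ] θ)).NeBot := hwcl
    obtain ⟨x, hx1, hx2⟩ :=
      ((hnw.filter_mono inf_le_left).and (hevF.filter_mono inf_le_right)).exists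
    linarith
  have hclo : θ ∈ closure (A ∩ Set.Iio θ) := by
    obtain ⟨ε, hε, hball⟩ := Metric.isOpen_iff.1 hAopen θ hθA
    have hsub : Set.Ioo (θ - ε) θ ⊆ A ∩ Set.Iio θ := by
      intro z hz
      refine ⟨hball ?_, hz.2⟩
      rw [Metric.mem_ball, Real.dist_eq, abs_lt]
      constructor <;> linarith [hz.1, hz.2]
    refine closure_mono hsub ?_
    rw [closure_Ioo (by linarith : θ - ε ≠ θ)]
    exact ⟨by linarith, le_refl _⟩
  have hnb2 : (𝓝[A ∩ Set.Iio θ] θ).NeBot := mem_closure_iff_nhdsWithin_neBot.1 hclo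
  have htendw : Filter.Tendsto (fun l => P w l) (𝓝[A ∩ Set.Iio θ] θ) (𝓝 (P w θ)) :=
    ((hcont w) θ hθA).mono_left (nhdsWithin_mono θ Set.inter_subset_left)
  have hwθ : P w θ ≤ P u θ :=
    le_of_tendsto htendw (eventually_nhdsWithin_of_forall fun l hl => stepA l hl.1 hl.2)
  have hwmin : ∀ y, P w θ ≤ P y θ := fun y => le_trans hwθ (hu y)
  have hwu : w = u := huniq θ hθA w u hwmin hu
  rw [hwu] at hwK
  exact absurd hwK (not_le.2 hbump)

end Aux

/-- Theorem B = [3], Theorem 1: if `P : X × A → ℝ` is quasi-concave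
and continuous in `λ ∈ A` (an open interval), lower semicontinuous and inf-compact
in `x`, and satisfies the strict minimax inequality
`sup_{λ∈A} inf_{x∈X} P < inf_{x∈X} sup_{λ∈A} P`, then for some `λ* ∈ A` the
function `P(·, λ*)` has at least two global minima. -/
theorem stmt2 {X : Type*} [TopologicalSpace X]
    (A : Set ℝ) (hAopen : IsOpen A) (hAinterval : Convex ℝ A) (hAne : A.Nonempty)
    (P : X → ℝ → ℝ)
    (hquasiconcave : ∀ x : X, ∀ ρ : ℝ, Convex ℝ {l ∈ A | ρ ≤ P x l})
    (hcont : ∀ x : X, ContinuousOn (fun l => P x l) A)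
    (hlsc : ∀ l ∈ A, LowerSemicontinuous fun x => P x l)
    (hinfcpt : ∀ l ∈ A, ∀ ρ : ℝ, IsCompact {x : X | P x l ≤ ρ})
    (hminimax : (⨆ l : A, ⨅ x : X, (P x l : EReal)) <
      ⨅ x : X, ⨆ l : A, (P x l : EReal)) :
    ∃ lstar ∈ A, ∃ u v : X, u ≠ v ∧
      (∀ y : X, P u lstar ≤ P y lstar) ∧ (∀ y : X, P v lstar ≤ P y lstar) := by
  -- X is nonempty
  have hXne : Nonempty X := by
    by_contra hX
    rw [not_nonempty_iff] at hX
    haveI : Nonempty ↥A := hAne.to_subtype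
    simp only [iInf_of_empty, iSup_const] at hminimax
    exact lt_irrefl _ hminimax
  -- pick a real ρ strictly between the minimax values
  obtain ⟨ρ, hρS, hρI⟩ := EReal.lt_iff_exists_real_btwn.1 hminimax
  have hρ1 : ∀ l ∈ A, ∃ x, P x l < ρ := by
    intro l hl
    have h1 : (⨅ x : X, (P x l : EReal)) < (ρ : EReal) :=
      lt_of_le_of_lt (le_iSup (fun l : A => ⨅ x : X, (P x (l : ℝ) : EReal)) ⟨l, hl⟩) hρS
    obtain ⟨x, hx⟩ := iInf_lt_iff.1 h1
    exact ⟨x, by exact_mod_cast hx⟩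
  have hρ2 : ∀ x : X, ∃ l ∈ A, ρ < P x l := by
    intro x
    have h1 : (ρ : EReal) < ⨆ l : A, (P x l : EReal) :=
      lt_of_lt_of_le hρI (iInf_le _ x)
    obtain ⟨l, hl⟩ := lt_iSup_iff.1 h1
    exact ⟨l, l.2, by exact_mod_cast hl⟩
  by_contra hcon
  push_neg at hcon
  have huniq : ∀ l ∈ A, ∀ u v : X, (∀ y, P u l ≤ P y l) → (∀ y, P v l ≤ P y l) → u = v := by
    intro l hl u v hu hv
    by_contra hne
    obtain ⟨y, hy⟩ := hcon l hl u v hne hu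
    exact absurd (hv y) (not_le.2 hy)
  have hexmin : ∀ l ∈ A, ∃ x, ∀ y, P x l ≤ P y l := fun l hl =>
    lsc_exists_min (hlsc l hl) (hinfcpt l hl) hXne.some
  -- the sets V (minimizer has right bump) and U (minimizer has left bump)
  set V := {l ∈ A | ∃ x, (∀ y, P x l ≤ P y l) ∧ ∃ l' ∈ A, l < l' ∧ ρ < P x l'} with hVdef
  set U := {l ∈ A | ∃ x, (∀ y, P x l ≤ P y l) ∧ ∃ l' ∈ A, l' < l ∧ ρ < P x l'} with hUdef
  have hF0 : ∀ l ∈ A, l ∈ U ∪ V := by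
    intro l hl
    obtain ⟨x, hx⟩ := hexmin l hl
    obtain ⟨x₀, hx₀⟩ := hρ1 l hl
    have hval : P x l < ρ := lt_of_le_of_lt (hx x₀) hx₀
    obtain ⟨l', hl'A, hl'⟩ := hρ2 x
    rcases lt_trichotomy l' l with h|h|h
    · exact Or.inl ⟨hl, x, hx, l', hl'A, h, hl'⟩
    · exact absurd hl' (by rw [h]; linarith)
    · exact Or.inr ⟨hl, x, hx, l', hl'A, h, hl'⟩
  -- no point of U lies strictly below a point of V
  have hF2 : ∀ l₁ ∈ U, ∀ l₂ ∈ V, l₂ ≤ l₁ := by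
    intro l₁ hl₁ l₂ hl₂
    by_contra hlt
    push_neg at hlt
    obtain ⟨hl₁A, x₁, hx₁min, η₁, hη₁A, hη₁lt, hbump₁⟩ := hl₁
    obtain ⟨hl₂A, v₂, hv₂min, ξ₂, hξ₂A, hξ₂gt, hbump₂⟩ := hl₂
    obtain ⟨z₁, hz₁⟩ := hρ1 l₁ hl₁A
    obtain ⟨z₂, hz₂⟩ := hρ1 l₂ hl₂A
    have hval₁ : P x₁ l₁ < ρ := lt_of_le_of_lt (hx₁min z₁) hz₁
    have hval₂ : P v₂ l₂ < ρ := lt_of_le_of_lt (hv₂min z₂) hz₂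
    have hdec : P x₁ l₂ ≤ P x₁ l₁ :=
      decLemma hquasiconcave hη₁A hl₂A hη₁lt hbump₁ hval₁ (le_of_lt hlt)
    have hinc : P v₂ l₁ ≤ P v₂ l₂ :=
      incLemma hquasiconcave hl₁A hξ₂A hξ₂gt hbump₂ hval₂ (le_of_lt hlt)
    have hv₂min1 : ∀ y, P v₂ l₁ ≤ P y l₁ := by
      intro y
      have h1 : P v₂ l₂ ≤ P x₁ l₂ := hv₂min x₁
      have h2 : P x₁ l₁ ≤ P y l₁ := hx₁min y
      linarith
    have heq : v₂ = x₁ := huniq l₁ hl₁A v₂ x₁ hv₂min1 hx₁min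
    rw [heq] at hbump₂ hval₂
    have h3 := threePoint hquasiconcave (x := x₁) hη₁A hξ₂A
      ⟨le_of_lt hη₁lt, le_of_lt (lt_trans hlt hξ₂gt)⟩
    rcases min_le_iff.1 h3 with h'|h'
    · linarith
    · linarith
  -- mirrored data
  set A' : Set ℝ := -A with hA'def
  set P' : X → ℝ → ℝ := fun x l => P x (-l) with hP'def
  have hmemA' : ∀ l : ℝ, l ∈ A' ↔ -l ∈ A := fun l => Set.mem_neg
  have hA'open : IsOpen A' := hAopen.neg
  have hA'conv : Convex ℝ A' := hAinterval.neg
  have hA'ne : A'.Nonempty := by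
    obtain ⟨a, ha⟩ := hAne
    exact ⟨-a, by rw [hmemA']; simpa using ha⟩
  have hq' : ∀ x : X, ∀ r : ℝ, Convex ℝ {l ∈ A' | r ≤ P' x l} := by
    intro x r
    have hset : {l ∈ A' | r ≤ P' x l} = -{l ∈ A | r ≤ P x l} := by
      ext l
      simp [hA'def, hP'def, Set.mem_neg]
    rw [hset]
    exact (hquasiconcave x r).neg
  have hcont' : ∀ x : X, ContinuousOn (fun l => P' x l) A' := by
    intro x
    exact (hcont x).comp (continuous_neg.continuousOn) (fun l hl => (hmemA' l).1 hl)
  have hlsc' : ∀ l ∈ A', LowerSemicontinuous fun x => P' x l :=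
    fun l hl => hlsc (-l) ((hmemA' l).1 hl)
  have hinfcpt' : ∀ l ∈ A', ∀ r : ℝ, IsCompact {x : X | P' x l ≤ r} :=
    fun l hl => hinfcpt (-l) ((hmemA' l).1 hl)
  have hρ1' : ∀ l ∈ A', ∃ x, P' x l < ρ := fun l hl => hρ1 (-l) ((hmemA' l).1 hl)
  have hρ2' : ∀ x : X, ∃ l ∈ A', ρ < P' x l := by
    intro x
    obtain ⟨l, hlA, hl⟩ := hρ2 x
    refine ⟨-l, ?_, ?_⟩
    · rw [hmemA']; simpa using hlA
    · simp only [hP'def, neg_neg]; exact hl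
  have huniq' : ∀ l ∈ A', ∀ u v : X, (∀ y, P' u l ≤ P' y l) → (∀ y, P' v l ≤ P' y l) → u = v :=
    fun l hl u v hu hv => huniq (-l) ((hmemA' l).1 hl) u v hu hv
  -- case analysis
  by_cases hVne : V.Nonempty
  · by_cases hUne : U.Nonempty
    · obtain ⟨u₀, hu₀⟩ := hUne
      have hVbdd : BddAbove V := ⟨u₀, fun v hv => hF2 u₀ hu₀ v hv⟩
      set θ := sSup V with hθdef
      obtain ⟨v₀, hv₀⟩ := hVne
      have hv₀θ : v₀ ≤ θ := le_csSup hVbdd hv₀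
      have hθu₀ : θ ≤ u₀ := csSup_le ⟨v₀, hv₀⟩ (fun v hv => hF2 u₀ hu₀ v hv)
      have hθA : θ ∈ A := hAinterval.ordConnected.out hv₀.1 hu₀.1 ⟨hv₀θ, hθu₀⟩
      have hbelowV : ∀ l ∈ A, l < θ → l ∈ V := by
        intro l hlA hlθ
        obtain ⟨v, hvV, hlv⟩ := exists_lt_of_lt_csSup ⟨v₀, hv₀⟩ hlθ
        rcases hF0 l hlA with hU'|hV'
        · exact absurd (hF2 l hU' v hvV) (not_le.2 hlv)
        · exact hV'
      have haboveU : ∀ l ∈ A, θ < l → l ∈ U := by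
        intro l hlA hθl
        rcases hF0 l hlA with hU'|hV'
        · exact hU'
        · exact absurd (le_csSup hVbdd hV') (not_le.2 hθl)
      rcases hF0 θ hθA with hθU|hθV
      · obtain ⟨-, uu, huu, ηη, hηA, hηθ, hbump⟩ := hθU
        exact clusterContra hAinterval hAopen hquasiconcave hcont hlsc hinfcpt hρ1 huniq
          hθA huu hηA hηθ hbump (fun l hlA hlθ => (hbelowV l hlA hlθ).2)
      · obtain ⟨-, uu, huu, ξξ, hξA, hξθ, hbump⟩ := hθV
        have hθA' : -θ ∈ A' := by rw [hmemA']; simpa using hθA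
        have huu' : ∀ y, P' uu (-θ) ≤ P' y (-θ) := by
          intro y; simp only [hP'def, neg_neg]; exact huu y
        have hξA' : -ξξ ∈ A' := by rw [hmemA']; simpa using hξA
        have hbump' : ρ < P' uu (-ξξ) := by simp only [hP'def, neg_neg]; exact hbump
        have hbelow' : ∀ l ∈ A', l < -θ →
            ∃ x, (∀ y, P' x l ≤ P' y l) ∧ ∃ l' ∈ A', l < l' ∧ ρ < P' x l' := by
          intro l hlA' hlθ
          have hnlA : -l ∈ A := (hmemA' l).1 hlA'
          have hθnl : θ < -l := by linarith [neg_lt_neg hlθ]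
          obtain ⟨-, x, hxmin, η', hη'A, hη'lt, hbump''⟩ := haboveU (-l) hnlA hθnl
          refine ⟨x, ?_, -η', ?_, ?_, ?_⟩
          · intro y; simp only [hP'def, neg_neg]; exact hxmin y
          · rw [hmemA']; simpa using hη'A
          · linarith
          · simp only [hP'def, neg_neg]; exact hbump''
        exact clusterContra hA'conv hA'open hq' hcont' hlsc' hinfcpt' hρ1' huniq'
          hθA' huu' hξA' (by linarith) hbump' hbelow'
    · -- U is empty : every minimizer has a right bump; mirrored cover argument
      have hall' : ∀ l ∈ A', ∃ x, (∀ y, P' x l ≤ P' y l) ∧ ∃ η ∈ A', η < l ∧ ρ < P' x η := by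
        intro l hlA'
        have hnlA : -l ∈ A := (hmemA' l).1 hlA'
        rcases hF0 (-l) hnlA with hU'|hV'
        · exact absurd ⟨-l, hU'⟩ hUne
        · obtain ⟨-, x, hxmin, ξ', hξ'A, hξ'gt, hbump''⟩ := hV'
          refine ⟨x, ?_, -ξ', ?_, ?_, ?_⟩
          · intro y; simp only [hP'def, neg_neg]; exact hxmin y
          · rw [hmemA']; simpa using hξ'A
          · linarith
          · simp only [hP'def, neg_neg]; exact hbump''
      exact coverContra hA'open hA'ne hq' hlsc' hinfcpt' hρ1' hρ2' hall'
  · -- V is empty : every minimizer has a left bump; cover argument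
    have hall : ∀ l ∈ A, ∃ x, (∀ y, P x l ≤ P y l) ∧ ∃ η ∈ A, η < l ∧ ρ < P x η := by
      intro l hl
      rcases hF0 l hl with hU'|hV'
      · exact hU'.2
      · exact absurd ⟨l, hV'⟩ hVne
    exact coverContra hAopen hAne hquasiconcave hlsc hinfcpt hρ1 hρ2 hall
end

section
/- Let X be a real normed space and I, J, Ψ, Φ : X → ℝ functions. Let x₀ ∈ X be a strict local minimum of I with I(x₀) = J(x₀) = Ψ(x₀) = Φ(x₀) = 0. Assume liminf_{x→x₀} J(x)/I(x) ≥ 0, liminf_{x→x₀} Φ(x)/I(x) ≥ 0, and L := liminf_{x→x₀} Ψ(x)/I(x) > −∞. Then for every ν > 0, every λ > 0, and every μ > max{0, −L}, the point x₀ is a strict local minimum of the functional E = μ(I + νJ) + Ψ + λΦ. If moreover there exists x₁ ∈ X with max{J(x₁), Ψ(x₁), Φ(x₁)} < 0 and ν > −I(x₁)/J(x₁), then E(x₁) < 0 = E(x₀), so x₀ is not a global minimum of E. -/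
open Filter Topology

/-- if `x₀` is a strict local minimum of `I` with
`I(x₀) = J(x₀) = Ψ(x₀) = Φ(x₀) = 0`, `liminf_{x→x₀} J/I ≥ 0`,
`liminf_{x→x₀} Φ/I ≥ 0` and `L := liminf_{x→x₀} Ψ/I > -∞`, then for all `ν > 0`,
`λ > 0` and `μ > max{0, -L}`, `x₀` is a strict local minimum of
`E = μ(I + νJ) + Ψ + λΦ`; and if `x₁` satisfies `max{J(x₁),Ψ(x₁),Φ(x₁)} < 0` and
`ν > -I(x₁)/J(x₁)`, then `E(x₁) < 0 = E(x₀)`, so `x₀` is not a global minimum. -/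
theorem stmt9 {X : Type*} [NormedAddCommGroup X] [NormedSpace ℝ X]
    (I J Ψ Φ : X → ℝ) (x₀ : X)
    (hslm : ∀ᶠ x in 𝓝[≠] x₀, I x₀ < I x)
    (hI0 : I x₀ = 0) (hJ0 : J x₀ = 0) (hΨ0 : Ψ x₀ = 0) (hΦ0 : Φ x₀ = 0)
    (hJliminf : ∀ ε : ℝ, 0 < ε → ∀ᶠ x in 𝓝[≠] x₀, -ε < J x / I x)
    (hΦliminf : ∀ ε : ℝ, 0 < ε → ∀ᶠ x in 𝓝[≠] x₀, -ε < Φ x / I x)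
    (hΨbdd : IsBoundedUnder (· ≥ ·) (𝓝[≠] x₀) (fun x => Ψ x / I x)) :
    ∀ ν : ℝ, 0 < ν → ∀ l : ℝ, 0 < l → ∀ μ : ℝ, 0 < μ →
      -(liminf (fun x => Ψ x / I x) (𝓝[≠] x₀)) < μ →
      (∀ᶠ x in 𝓝[≠] x₀,
          μ * (I x₀ + ν * J x₀) + Ψ x₀ + l * Φ x₀ < μ * (I x + ν * J x) + Ψ x + l * Φ x) ∧
      (∀ x₁ : X, max (J x₁) (max (Ψ x₁) (Φ x₁)) < 0 → -(I x₁ / J x₁) < ν →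
        μ * (I x₁ + ν * J x₁) + Ψ x₁ + l * Φ x₁ <
          μ * (I x₀ + ν * J x₀) + Ψ x₀ + l * Φ x₀ ∧
        ¬ (∀ y : X, μ * (I x₀ + ν * J x₀) + Ψ x₀ + l * Φ x₀ ≤
            μ * (I y + ν * J y) + Ψ y + l * Φ y)) := by
  intro ν hν l hl μ hμ hμL
  set L := liminf (fun x => Ψ x / I x) (𝓝[≠] x₀) with hLdef
  have hμν : 0 < μ * ν := mul_pos hμ hν
  have hε : 0 < (μ + L) / 4 := by linarith
  constructor
  · have h1 := hJliminf (((μ + L) / 4) / (μ * ν)) (by positivity)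
    have h2 := hΦliminf (((μ + L) / 4) / l) (by positivity)
    have h3 : ∀ᶠ x in 𝓝[≠] x₀, L - (μ + L) / 4 < Ψ x / I x :=
      eventually_lt_of_lt_liminf (by linarith) hΨbdd
    filter_upwards [hslm, h1, h2, h3] with x hx h1 h2 h3
    rw [hI0] at hx
    have hIne : I x ≠ 0 := ne_of_gt hx
    have e1 : -((μ + L) / 4) < μ * ν * (J x / I x) := by
      have := (mul_lt_mul_iff_right₀ hμν).2 h1
      have heq : μ * ν * (-(((μ + L) / 4) / (μ * ν))) = -((μ + L) / 4) := by
        field_simp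
      linarith [heq ▸ this]
    have e2 : -((μ + L) / 4) < l * (Φ x / I x) := by
      have := (mul_lt_mul_iff_right₀ hl).2 h2
      have heq : l * (-(((μ + L) / 4) / l)) = -((μ + L) / 4) := by field_simp
      linarith [heq ▸ this]
    have hsum : 0 < μ + μ * ν * (J x / I x) + Ψ x / I x + l * (Φ x / I x) := by
      linarith
    have hkey : μ * (I x + ν * J x) + Ψ x + l * Φ x =
        I x * (μ + μ * ν * (J x / I x) + Ψ x / I x + l * (Φ x / I x)) := by
      field_simp
    rw [hI0, hJ0, hΨ0, hΦ0, hkey]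
    simpa using mul_pos hx hsum
  · intro x₁ hmax hν1
    have hJ1 : J x₁ < 0 := lt_of_le_of_lt (le_max_left _ _) hmax
    have hΨ1 : Ψ x₁ < 0 :=
      lt_of_le_of_lt (le_trans (le_max_left _ _) (le_max_right _ _)) hmax
    have hΦ1 : Φ x₁ < 0 :=
      lt_of_le_of_lt (le_trans (le_max_right _ _) (le_max_right _ _)) hmax
    have hνJ : ν * J x₁ < -(I x₁) := by
      have := mul_lt_mul_of_neg_right hν1 hJ1
      have heq : -(I x₁ / J x₁) * J x₁ = -(I x₁) := by
        rw [neg_mul, div_mul_cancel₀ _ (ne_of_lt hJ1)]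
      nlinarith [this, heq]
    have hE1 : μ * (I x₁ + ν * J x₁) + Ψ x₁ + l * Φ x₁ < 0 := by
      have h1 : μ * (I x₁ + ν * J x₁) < 0 := mul_neg_of_pos_of_neg hμ (by linarith)
      have h2 : l * Φ x₁ < 0 := mul_neg_of_pos_of_neg hl hΦ1
      linarith
    have hzero : μ * (I x₀ + ν * J x₀) + Ψ x₀ + l * Φ x₀ = 0 := by
      rw [hI0, hJ0, hΨ0, hΦ0]; ring
    refine ⟨by rw [hzero]; exact hE1, fun h => ?_⟩
    have := h x₁
    rw [hzero] at this
    linarith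
end
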